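/- Let N ≥ 1 be an integer and l_1,…,l_N positive reals with l_1+…+l_N = 1. Let h : ℝ_t × ℝ²_{x,y} → ℝ and 𝐮_j : ℝ_t × ℝ²_{x,y} → ℝ² (j = 1,…,N) be continuously differentiable on an open set Ω, and set h_j := l_j h. Assume the total mass equation ∂_t h + Σ_{j=1}^N ∇_{x,y}·(h_j 𝐮_j) = 0 holds on Ω. Define G_{α+1/2} := Σ_{j=1}^α ( ∂_t h_j + ∇_{x,y}·(h_j 𝐮_j) ) for α = 0,…,N. Then on Ω, for every 1 ≤ α ≤ N: G_{α+1/2} = − Σ_{j=1}^N ( Σ_{p=1}^α l_p − 𝟙_{j ≤ α} ) ∇_{x,y}·(h_j 𝐮_j); in particular G_{1/2} = G_{N+1/2} = 0 and, for each α, ∂_t h_α + ∇_{x,y}·(h_α 𝐮_α) = G_{α+1/2} − G_{α−1/2}. -/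

import Mathlib

open MeasureTheory

/-- Partial derivative in time `t` of a function of `(t, x, y)`. -/
noncomputable def pt (f : ℝ × ℝ × ℝ → ℝ) (q : ℝ × ℝ × ℝ) : ℝ :=
  deriv (fun s => f (s, q.2.1, q.2.2)) q.1

/-- Partial derivative in `x` of a function of `(t, x, y)`. -/
noncomputable def px (f : ℝ × ℝ × ℝ → ℝ) (q : ℝ × ℝ × ℝ) : ℝ :=
  deriv (fun s => f (q.1, s, q.2.2)) q.2.1

/-- Partial derivative in `y` of a function of `(t, x, y)`. -/
noncomputable def py (f : ℝ × ℝ × ℝ → ℝ) (q : ℝ × ℝ × ℝ) : ℝ :=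
  deriv (fun s => f (q.1, q.2.1, s)) q.2.2

/-- Horizontal divergence `∇_{x,y}·F` of a horizontal vector field. -/
noncomputable def hdiv (F : ℝ × ℝ × ℝ → ℝ × ℝ) (q : ℝ × ℝ × ℝ) : ℝ :=
  px (fun p => (F p).1) q + py (fun p => (F p).2) q

/-- the mass-exchange terms of the layer-averaged Euler system. -/
theorem stmt0
    (N : ℕ) (hN : 1 ≤ N)
    (l : ℕ → ℝ) (hl : ∀ j ∈ Finset.Icc 1 N, 0 < l j)
    (hlsum : ∑ j ∈ Finset.Icc 1 N, l j = 1)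
    (Ω : Set (ℝ × ℝ × ℝ)) (hΩ : IsOpen Ω)
    (h : ℝ × ℝ × ℝ → ℝ) (hhC1 : ContDiffOn ℝ 1 h Ω)
    (u : ℕ → ℝ × ℝ × ℝ → ℝ × ℝ)
    (huC1 : ∀ j ∈ Finset.Icc 1 N, ContDiffOn ℝ 1 (u j) Ω)
    (hlay : ℕ → ℝ × ℝ × ℝ → ℝ)
    (hlay_def : ∀ j q, hlay j q = l j * h q)
    (hmass : ∀ q ∈ Ω,
      pt h q + ∑ j ∈ Finset.Icc 1 N, hdiv (fun p => hlay j p • u j p) q = 0)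
    (G : ℕ → ℝ × ℝ × ℝ → ℝ)
    (hG : ∀ α q, G α q = ∑ j ∈ Finset.Icc 1 α,
        (pt (hlay j) q + hdiv (fun p => hlay j p • u j p) q)) :
    ∀ q ∈ Ω,
      (∀ α ∈ Finset.Icc 1 N,
        G α q = -∑ j ∈ Finset.Icc 1 N,
          ((∑ p ∈ Finset.Icc 1 α, l p) - (if j ≤ α then (1 : ℝ) else 0)) *
            hdiv (fun p => hlay j p • u j p) q) ∧
      G 0 q = 0 ∧ G N q = 0 ∧
      (∀ α ∈ Finset.Icc 1 N,
        pt (hlay α) q + hdiv (fun p => hlay α p • u α p) q = G α q - G (α - 1) q) := by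
  intro q hq
  have hmq := hmass q hq
  set D : ℕ → ℝ := fun j => hdiv (fun p => hlay j p • u j p) q with hD
  have hpt : ∀ j, pt (hlay j) q = l j * pt h q := by
    intro j
    simp only [pt, hlay_def]
    exact deriv_const_mul_field _
  have hGf : ∀ α, G α q = (∑ p ∈ Finset.Icc 1 α, l p) * pt h q
      + ∑ j ∈ Finset.Icc 1 α, D j := by
    intro α
    rw [hG, Finset.sum_add_distrib, Finset.sum_mul]
    congr 1
    exact Finset.sum_congr rfl fun j _ => by rw [hpt]
  have hph : pt h q = -∑ j ∈ Finset.Icc 1 N, D j := by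
    have := hmq; simp only [hD] at this ⊢; linarith
  have main : ∀ α ∈ Finset.Icc 1 N,
      G α q = -∑ j ∈ Finset.Icc 1 N,
        ((∑ p ∈ Finset.Icc 1 α, l p) - (if j ≤ α then (1 : ℝ) else 0)) * D j := by
    intro α hα
    have hαN : α ≤ N := (Finset.mem_Icc.mp hα).2
    have hsub : ∑ j ∈ Finset.Icc 1 α, D j
        = ∑ j ∈ Finset.Icc 1 N, (if j ≤ α then (1 : ℝ) else 0) * D j := by
      simp only [ite_mul, one_mul, zero_mul]
      rw [← Finset.sum_filter]
      congr 1
      ext j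
      simp only [Finset.mem_filter, Finset.mem_Icc]
      omega
    rw [hGf α, hph, hsub]
    rw [mul_neg, Finset.mul_sum, ← Finset.sum_neg_distrib, ← Finset.sum_neg_distrib,
      ← Finset.sum_add_distrib]
    apply Finset.sum_congr rfl
    intro j _
    ring
  refine ⟨main, ?_, ?_, ?_⟩
  · rw [hG]; simp
  · have := main N (Finset.mem_Icc.mpr ⟨hN, le_rfl⟩)
    rw [this]
    rw [← Finset.sum_neg_distrib]
    apply Finset.sum_eq_zero
    intro j hj
    have : j ≤ N := (Finset.mem_Icc.mp hj).2
    simp [this, hlsum]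
  · intro α hα
    have h1 := (Finset.mem_Icc.mp hα).1
    obtain ⟨β, rfl⟩ : ∃ β, α = β + 1 := ⟨α - 1, by omega⟩
    have hs := Finset.sum_Icc_succ_top (f := fun j => pt (hlay j) q + D j)
      (Nat.one_le_iff_ne_zero.mpr (by omega) : 1 ≤ β + 1)
    rw [hG (β + 1) q, hG (β + 1 - 1) q] at *
    simp only [Nat.add_sub_cancel, ← hD] at *
    rw [hs]
    ring
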